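/- For every positive integer n, setting q = 6^n, there exists an integer a with 1 ≤ a < q and gcd(a, q) = 1 such that a/q has a finite simple continued fraction expansion a/q = [a_1, …, a_r] (each a_i a positive integer) with a_i ≤ 5 for all i. -/

import Mathlib

/-- The value of the finite simple continued fraction `1/(a₁ + 1/(a₂ + ⋯ + 1/aᵣ))`. -/
def cfVal : List ℕ → ℚ
  | [] => 0
  | a :: l => 1 / (a + cfVal l)

/-- Continuant matrix `[[a,b],[c,d]]` of a word, as a 4-tuple. -/
def m2 : List ℕ → ℕ × ℕ × ℕ × ℕ
  | [] => (1, 0, 0, 1)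
  | k :: l =>
    (k * (m2 l).1 + (m2 l).2.2.1, k * (m2 l).2.1 + (m2 l).2.2.2, (m2 l).1, (m2 l).2.1)

/-- 2×2 matrix multiplication on 4-tuples. -/
def mmul (x y : ℕ × ℕ × ℕ × ℕ) : ℕ × ℕ × ℕ × ℕ :=
  (x.1 * y.1 + x.2.1 * y.2.2.1, x.1 * y.2.1 + x.2.1 * y.2.2.2,
   x.2.2.1 * y.1 + x.2.2.2 * y.2.2.1, x.2.2.1 * y.2.1 + x.2.2.2 * y.2.2.2)

/-- Transpose. -/
def mtr (x : ℕ × ℕ × ℕ × ℕ) : ℕ × ℕ × ℕ × ℕ := (x.1, x.2.2.1, x.2.1, x.2.2.2)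

/-- Denominator continuant. -/
def qd (l : List ℕ) : ℕ := (m2 l).1

/-- Numerator continuant. -/
def pn (l : List ℕ) : ℕ := (m2 l).2.2.1

lemma m2_append (l₁ l₂ : List ℕ) : m2 (l₁ ++ l₂) = mmul (m2 l₁) (m2 l₂) := by
  induction l₁ with
  | nil => simp [m2, mmul]
  | cons k l ih =>
    simp only [List.cons_append, m2, List.append_eq, ih, mmul, Prod.mk.injEq]
    refine ⟨?_, ?_, trivial⟩ <;> ring_nf

lemma m2_reverse (l : List ℕ) : m2 l.reverse = mtr (m2 l) := by
  induction l with
  | nil => simp [m2, mtr]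
  | cons k l ih =>
    simp only [List.reverse_cons, m2_append, ih, m2, mtr, mmul, Prod.mk.injEq]
    and_intros <;> ring

lemma fold1 (b : ℕ) (u : List ℕ) :
    qd (u.reverse ++ ([b + 1, b + 3] ++ u)) = qd ((b + 2) :: u) ^ 2 := by
  rcases h : m2 u with ⟨q, s, p, t⟩
  simp only [qd, m2_append, m2_reverse, m2, List.append_eq, List.nil_append, h, mtr, mmul]
  ring

lemma fold6 (b : ℕ) (u : List ℕ) :
    qd (u.reverse ++ ([b + 2, 5, 1, b + 1] ++ u)) = 6 * qd ((b + 2) :: u) ^ 2 := by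
  rcases h : m2 u with ⟨q, s, p, t⟩
  simp only [qd, m2_append, m2_reverse, m2, List.append_eq, List.nil_append, h, mtr, mmul]
  ring

lemma qd_cons (k : ℕ) (l : List ℕ) : qd (k :: l) = k * qd l + pn l := rfl

lemma pn_cons (k : ℕ) (l : List ℕ) : pn (k :: l) = qd l := rfl

lemma qd_pos (l : List ℕ) (h : ∀ x ∈ l, 0 < x) : 0 < qd l := by
  induction l with
  | nil => simp [qd, m2]
  | cons k l ih =>
    have hk : 0 < k := h k (by simp)
    have hq : 0 < qd l := ih fun x hx => h x (by simp [hx])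
    have : 0 < k * qd l := Nat.mul_pos hk hq
    simp only [qd_cons]
    omega

lemma gcd_qd_pn (l : List ℕ) : Nat.gcd (qd l) (pn l) = 1 := by
  induction l with
  | nil => simp [qd, pn, m2]
  | cons k l ih =>
    simp only [qd_cons, pn_cons]
    rw [Nat.add_comm, Nat.gcd_add_mul_right_left, Nat.gcd_comm]
    exact ih

lemma cf_eq (L : List ℕ) (h : ∀ x ∈ L, 0 < x) :
    cfVal L = (pn L : ℚ) / (qd L : ℚ) := by
  induction L with
  | nil => simp [cfVal, pn, qd, m2]
  | cons k l ih =>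
    have hk : 0 < k := h k (by simp)
    have hq : 0 < qd l := qd_pos l fun x hx => h x (by simp [hx])
    have hq' : (0 : ℚ) < (qd l : ℚ) := by exact_mod_cast hq
    have hk' : (1 : ℚ) ≤ (k : ℚ) := by exact_mod_cast hk
    have h1 : (k : ℚ) + (pn l : ℚ) / (qd l : ℚ)
        = ((k * qd l + pn l : ℕ) : ℚ) / (qd l : ℚ) := by
      push_cast
      field_simp
    rw [cfVal, ih fun x hx => h x (by simp [hx]), qd_cons, pn_cons, h1, one_div_div]

lemma mem_app {P : ℕ → Prop} {u v : List ℕ} (hu : ∀ x ∈ u, P x) (hv : ∀ x ∈ v, P x) :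
    ∀ x ∈ u ++ v, P x := fun x hx => (List.mem_append.1 hx).elim (hu x) (hv x)

lemma mem_rev {P : ℕ → Prop} {u : List ℕ} (hu : ∀ x ∈ u, P x) :
    ∀ x ∈ u.reverse, P x := fun x hx => hu x (List.mem_reverse.1 hx)

/-- Core construction: for `n ≥ 2` there is a word with all digits in `[1,5]`,
first and last digits in `[2,4]`, whose denominator continuant is `6^n`. -/
lemma core : ∀ n : ℕ, 2 ≤ n → ∃ b c : ℕ, ∃ u : List ℕ,
    b ≤ 2 ∧ c ≤ 2 ∧ (∀ x ∈ u, 1 ≤ x ∧ x ≤ 5) ∧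
    qd ((b + 2) :: (u ++ [c + 2])) = 6 ^ n := by
  intro n
  induction n using Nat.strong_induction_on with
  | _ n ih =>
    intro hn
    rcases Nat.lt_or_ge n 4 with h4 | h4
    · interval_cases n
      · -- n = 2 : word [3,3,1,2]
        refine ⟨1, 0, [3, 1], by norm_num, by norm_num, ?_, by decide⟩
        intro x hx
        rcases List.mem_cons.1 hx with h | h
        · omega
        · rcases List.mem_cons.1 h with h | h
          · omega
          · simp at h
      · -- n = 3 : word [4,2,2,4,2]
        refine ⟨2, 0, [2, 2, 4], by norm_num, by norm_num, ?_, by decide⟩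
        intro x hx
        rcases List.mem_cons.1 hx with h | h
        · omega
        · rcases List.mem_cons.1 h with h | h
          · omega
          · rcases List.mem_cons.1 h with h | h
            · omega
            · simp at h
    · set m := n / 2 with hm
      have hm2 : 2 ≤ m := by omega
      have hmn : m < n := by omega
      obtain ⟨b, c, u, hb, hc, hu, hq⟩ := ih m hmn hm2
      have hmid1 : ∀ x ∈ [b + 1, b + 3], 1 ≤ x ∧ x ≤ 5 := by
        intro x hx
        rcases List.mem_cons.1 hx with h | h
        · omega
        · rcases List.mem_cons.1 h with h | h
          · omega
          · simp at h
      have hmid6 : ∀ x ∈ [b + 2, 5, 1, b + 1], 1 ≤ x ∧ x ≤ 5 := by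
        intro x hx
        rcases List.mem_cons.1 hx with h | h
        · omega
        rcases List.mem_cons.1 h with h | h
        · omega
        rcases List.mem_cons.1 h with h | h
        · omega
        rcases List.mem_cons.1 h with h | h
        · omega
        · simp at h
      rcases Nat.even_or_odd n with ⟨k, hk⟩ | ⟨k, hk⟩
      · -- n = 2m
        have hn2 : n = 2 * m := by omega
        refine ⟨c, c, u.reverse ++ ([b + 1, b + 3] ++ u), hc, hc,
          mem_app (mem_rev hu) (mem_app hmid1 hu), ?_⟩
        have heq : (c + 2) :: ((u.reverse ++ ([b + 1, b + 3] ++ u)) ++ [c + 2])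
            = (u ++ [c + 2]).reverse ++ ([b + 1, b + 3] ++ (u ++ [c + 2])) := by
          simp [List.append_assoc]
        rw [heq, fold1 b (u ++ [c + 2]), hq, hn2, two_mul, pow_add, sq]
      · -- n = 2m + 1
        have hn2 : n = 2 * m + 1 := by omega
        refine ⟨c, c, u.reverse ++ ([b + 2, 5, 1, b + 1] ++ u), hc, hc,
          mem_app (mem_rev hu) (mem_app hmid6 hu), ?_⟩
        have heq : (c + 2) :: ((u.reverse ++ ([b + 2, 5, 1, b + 1] ++ u)) ++ [c + 2])
            = (u ++ [c + 2]).reverse ++ ([b + 2, 5, 1, b + 1] ++ (u ++ [c + 2])) := by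
          simp [List.append_assoc]
        rw [heq, fold6 b (u ++ [c + 2]), hq, hn2]
        conv_rhs => rw [pow_succ, pow_mul']
        ring

/-- Zaremba's conjecture with constant `5` for `q = 6^n`, `n ≥ 1`. -/
theorem zaremba_six_pow (n : ℕ) (hn : 0 < n) :
    ∃ a : ℕ, 1 ≤ a ∧ a < 6 ^ n ∧ Nat.gcd a (6 ^ n) = 1 ∧
      ∃ L : List ℕ, (a : ℚ) / (6 ^ n) = cfVal L ∧
        ∀ x ∈ L, 0 < x ∧ x ≤ 5 := by
  rcases Nat.lt_or_ge n 2 with h2 | h2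
  · have hn1 : n = 1 := by omega
    subst hn1
    refine ⟨1, le_refl 1, by norm_num, by norm_num, [5, 1], ?_, by decide⟩
    norm_num [cfVal]
  · obtain ⟨b, c, u, hb, hc, hu, hq⟩ := core n h2
    set L := (b + 2) :: (u ++ [c + 2]) with hL
    have hbounds : ∀ x ∈ L, 1 ≤ x ∧ x ≤ 5 := by
      rw [hL]
      intro x hx
      rcases List.mem_cons.1 hx with h | h
      · omega
      refine mem_app hu ?_ x h
      intro y hy
      rcases List.mem_cons.1 hy with h' | h'
      · omega
      · simp at h'
    have hpos : ∀ x ∈ L, 0 < x := fun x hx => (hbounds x hx).1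
    set a := pn L with ha
    have htq : 0 < qd (u ++ [c + 2]) := by
      apply qd_pos
      intro x hx
      have := hbounds x (by rw [hL]; exact List.mem_cons_of_mem _ hx)
      omega
    have haq : a < qd L := by
      have h1 : qd L = (b + 2) * qd (u ++ [c + 2]) + pn (u ++ [c + 2]) := rfl
      have h2 : a = qd (u ++ [c + 2]) := rfl
      have h3 : 2 * qd (u ++ [c + 2]) ≤ (b + 2) * qd (u ++ [c + 2]) :=
        Nat.mul_le_mul_right _ (by omega)
      omega
    have ha1 : 1 ≤ a := htq
    refine ⟨a, ha1, by rw [← hq]; exact haq, ?_, L, ?_, ?_⟩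
    · rw [← hq, Nat.gcd_comm]
      exact gcd_qd_pn L
    · rw [cf_eq L hpos, hq]
      push_cast
      ring
    · intro x hx
      have := hbounds x hx
      exact ⟨by omega, by omega⟩
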